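/- For m ≥ 2, every extremal point p of the compact convex polyhedron Q_m has connected improved initial graph Γ'_p, and hence p is realized as the frequency tuple of some cyclic word. -/

import Mathlib

open Finset
noncomputable section
attribute [local instance] Classical.propDecidable

abbrev Letter (k : ℕ) := Fin k × Bool

def linv {k : ℕ} (x : Letter k) : Letter k := (x.1, !x.2)

/-- `w` is a freely reduced word: no letter is followed by its inverse. -/
def Reduced {k : ℕ} (w : List (Letter k)) : Prop :=
  ∀ i < w.length, w[i + 1]? ≠ (w[i]?).map linv

/-- `w` is cyclically reduced. -/
def CyclRed {k : ℕ} (w : List (Letter k)) : Prop := Reduced (w ++ w)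

/-- `w` and `w'` define the same cyclic word. -/
def CyclEq {k : ℕ} (w w' : List (Letter k)) : Prop := ∃ n, w' = w.rotate n

/-- the word `u` occurs in the cyclic word of `w` starting at position `i` (with wrap-around). -/
def occursAt {k : ℕ} (w u : List (Letter k)) (i : ℕ) : Prop :=
  ∀ j < u.length, w[(i + j) % w.length]? = u[j]?

/-- the number `n_w(u)` of cyclic occurrences of `u` in the cyclic word `w`. -/
def cyclCount {k : ℕ} (w u : List (Letter k)) : ℕ :=
  ((Finset.range w.length).filter (occursAt w u)).card

/-- the frequency `f_w(u) = n_w(u)/‖w‖`. -/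
def freq {k : ℕ} (w u : List (Letter k)) : ℚ := (cyclCount w u : ℚ) / (w.length : ℚ)

/-- the finite set of freely reduced words of length `m`. -/
def WordsM (k m : ℕ) : Finset (List (Letter k)) :=
  ((Finset.univ : Finset (Fin m → Letter k)).image fun f => List.ofFn f).filter
    (fun w => Reduced w)

/-- the polyhedron `Q_m`, realized as functions supported on reduced words of length `m`. -/
def Qset (k m : ℕ) : Set (List (Letter k) → ℝ) :=
  {q | (∀ v, ¬(Reduced v ∧ v.length = m) → q v = 0) ∧
       (∀ v, 0 ≤ q v) ∧
       (∑ v ∈ WordsM k m, q v = 1) ∧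
       ∀ u : List (Letter k), Reduced u → u.length = m - 1 →
         (∑ x ∈ Finset.univ.filter (fun x : Letter k => Reduced (u ++ [x])), q (u ++ [x])) =
         (∑ x ∈ Finset.univ.filter (fun x : Letter k => Reduced (x :: u)), q (x :: u)) }

/-- the undirected adjacency relation of the improved initial graph `Γ'_q`. -/
def eadj (k m : ℕ) (q : List (Letter k) → ℝ) (u u' : List (Letter k)) : Prop :=
  ∃ v, Reduced v ∧ v.length = m ∧ 0 < q v ∧
    ((v.take (m - 1) = u ∧ v.drop 1 = u') ∨ (v.take (m - 1) = u' ∧ v.drop 1 = u))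

/-- `u` is a vertex of the improved initial graph `Γ'_q`. -/
def isVert (k m : ℕ) (q : List (Letter k) → ℝ) (u : List (Letter k)) : Prop :=
  ∃ v, Reduced v ∧ v.length = m ∧ 0 < q v ∧ (v.take (m - 1) = u ∨ v.drop 1 = u)

/-- the underlying undirected graph of `Γ'_q` is connected. -/
def GraphConn (k m : ℕ) (q : List (Letter k) → ℝ) : Prop :=
  ∀ u u', isVert k m q u → isVert k m q u' → Relation.ReflTransGen (eadj k m q) u u'


lemma mem_WordsM {k m : ℕ} {v : List (Letter k)} :
    v ∈ WordsM k m ↔ Reduced v ∧ v.length = m := by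
  unfold WordsM
  rw [Finset.mem_filter, Finset.mem_image]
  constructor
  · rintro ⟨⟨f, -, rfl⟩, hr⟩
    exact ⟨hr, List.length_ofFn (f := f)⟩
  · rintro ⟨hr, hl⟩
    refine ⟨⟨fun i => v[(i : ℕ)]'(by omega), Finset.mem_univ _, ?_⟩, hr⟩
    apply List.ext_getElem?
    intro n
    rw [List.getElem?_ofFn]
    by_cases h : n < m
    · simp [List.ofFnNthVal, h, List.getElem?_eq_getElem (by omega : n < v.length)]
    · simp [List.ofFnNthVal, h, List.getElem?_eq_none (by omega : v.length ≤ n)]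

lemma Reduced.drop_one {k : ℕ} {v : List (Letter k)} (h : Reduced v) : Reduced (v.drop 1) := by
  intro i hi
  rw [List.getElem?_drop, List.getElem?_drop]
  have hlen : i + 1 < v.length := by
    have := List.length_drop (i := 1) (l := v)
    omega
  have := h (i + 1) hlen
  have e1 : 1 + i = i + 1 := by omega
  have e2 : 1 + (i+1) = i + 1 + 1 := by omega
  rw [e1, e2]
  exact this

lemma overlap_letters {k m : ℕ} {v v' : List (Letter k)}
    (h : v'.take (m - 1) = v.drop 1) {s : ℕ} (hs : s < m - 1) :
    v'[s]? = v[s + 1]? := by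
  have h1 : (v'.take (m-1))[s]? = v'[s]? := by rw [List.getElem?_take, if_pos hs]
  rw [← h1, h, List.getElem?_drop, Nat.add_comm]

lemma mod_succ_mod (t L : ℕ) : (t + 1) % L = (t % L + 1) % L := by
  conv_lhs => rw [← Nat.div_add_mod t L]
  rw [Nat.add_assoc, Nat.mul_add_mod]

lemma step_lemma {k m : ℕ} (hm : 2 ≤ m) {p : List (Letter k) → ℝ} (hp : p ∈ Qset k m)
    {v : List (Letter k)} (hv : Reduced v ∧ v.length = m ∧ 0 < p v) :
    ∃ v', (Reduced v' ∧ v'.length = m ∧ 0 < p v') ∧ v'.take (m - 1) = v.drop 1 := by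
  obtain ⟨hz, hnn, hsum, hcons⟩ := hp
  obtain ⟨hred, hlen, hpos⟩ := hv
  set u := v.drop 1 with hu
  have hured : Reduced u := hred.drop_one
  have hulen : u.length = m - 1 := by simp [hu, hlen]
  have hvne : v ≠ [] := by intro h; rw [h] at hlen; simp at hlen; omega
  have hvhead : v = v.head hvne :: u := by
    rw [hu, List.drop_one]; exact (List.cons_head_tail hvne).symm
  have hmem : v.head hvne ∈ Finset.univ.filter (fun x : Letter k => Reduced (x :: u)) := by
    rw [Finset.mem_filter]
    exact ⟨Finset.mem_univ _, by rw [← hvhead]; exact hred⟩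
  have hrhs : 0 < ∑ x ∈ Finset.univ.filter (fun x : Letter k => Reduced (x :: u)), p (x :: u) := by
    have h1 : p (v.head hvne :: u) ≤ _ :=
      Finset.single_le_sum (f := fun x => p (x :: u)) (fun i _ => hnn _) hmem
    rw [← hvhead] at h1
    exact lt_of_lt_of_le hpos h1
  rw [← hcons u hured hulen] at hrhs
  have := Finset.exists_ne_zero_of_sum_ne_zero (ne_of_gt hrhs)
  obtain ⟨x, hxmem, hxne⟩ := this
  rw [Finset.mem_filter] at hxmem
  refine ⟨u ++ [x], ⟨hxmem.2, ?_, lt_of_le_of_ne (hnn _) (Ne.symm hxne)⟩, List.take_left' hulen⟩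
  rw [List.length_append, hulen]
  simp; omega


lemma heads_eq {α : Type*} {l l' : List α} (h : l = l') (h1 : l ≠ []) (h2 : l' ≠ []) :
    l.head h1 = l'.head h2 := by subst h; rfl

theorem stmt15 (k m : ℕ) (hk : 2 ≤ k) (hm : 2 ≤ m) (p : List (Letter k) → ℝ)
    (hp : p ∈ Set.extremePoints ℝ (Qset k m)) :
    GraphConn k m p ∧
      ∃ w : List (Letter k), CyclRed w ∧ w ≠ [] ∧
        ∀ v, Reduced v → v.length = m → p v = ((freq w v : ℚ) : ℝ) := by
  classical
  obtain ⟨hpQ, hext⟩ := hp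
  obtain ⟨hz, hnn, hsum, hcons⟩ := hpQ
  -- base edge
  have hbase : ∃ v, Reduced v ∧ v.length = m ∧ 0 < p v := by
    have h1 : ∑ v ∈ WordsM k m, p v ≠ 0 := by rw [hsum]; norm_num
    obtain ⟨v, hvmem, hvne⟩ := Finset.exists_ne_zero_of_sum_ne_zero h1
    rw [mem_WordsM] at hvmem
    exact ⟨v, hvmem.1, hvmem.2, lt_of_le_of_ne (hnn v) (Ne.symm hvne)⟩
  obtain ⟨v₀, hv₀⟩ := hbase
  set P : List (Letter k) → Prop := fun v => Reduced v ∧ v.length = m ∧ 0 < p v with hPdef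
  have hstep' : ∀ v : List (Letter k), ∃ v', P v → P v' ∧ v'.take (m-1) = v.drop 1 := by
    intro v
    by_cases h : P v
    · obtain ⟨v', h1, h2⟩ := step_lemma hm ⟨hz, hnn, hsum, hcons⟩ h
      exact ⟨v', fun _ => ⟨h1, h2⟩⟩
    · exact ⟨[], fun h' => absurd h' h⟩
  choose f hf using hstep'
  set W : ℕ → List (Letter k) := fun n => f^[n] v₀ with hWdef
  have hW : ∀ n, P (W n) := by
    intro n; induction n with
    | zero => exact hv₀
    | succ n ih =>
      have : W (n+1) = f (W n) := Function.iterate_succ_apply' f n v₀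
      rw [this]
      exact (hf _ ih).1
  have hWov : ∀ n, (W (n+1)).take (m-1) = (W n).drop 1 := by
    intro n
    have : W (n+1) = f (W n) := Function.iterate_succ_apply' f n v₀
    rw [this]
    exact (hf _ (hW n)).2
  -- pigeonhole
  obtain ⟨i, j, hij, hWij⟩ : ∃ i j, i < j ∧ W i = W j := by
    have hmap : ∀ a ∈ Finset.range ((WordsM k m).card + 1), W a ∈ WordsM k m := by
      intro a _; rw [mem_WordsM]; exact ⟨(hW a).1, (hW a).2.1⟩
    obtain ⟨a, -, b, -, hab, hfab⟩ :=
      Finset.exists_ne_map_eq_of_card_lt_of_maps_to (by simp) hmap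
    rcases lt_or_gt_of_ne hab with h | h
    · exact ⟨a, b, h, hfab⟩
    · exact ⟨b, a, h, hfab.symm⟩
  set L := j - i with hLdef
  have hL : 0 < L := by omega
  set e : ℕ → List (Letter k) := fun t => W (i + t % L) with hedef
  have hemod : ∀ t, e (t % L) = e t := by
    intro t
    simp only [hedef, Nat.mod_mod_of_dvd _ (dvd_refl L)]
  have heP : ∀ t, P (e t) := fun t => hW _
  have heov : ∀ t, (e (t+1)).take (m-1) = (e t).drop 1 := by
    intro t
    have h1 : (t+1) % L = (t % L + 1) % L := mod_succ_mod t L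
    have h2 : t % L < L := Nat.mod_lt _ hL
    by_cases hc : t % L + 1 < L
    · have h3 : (t+1) % L = t % L + 1 := by rw [h1, Nat.mod_eq_of_lt hc]
      show (W (i + (t+1) % L)).take (m-1) = (W (i + t % L)).drop 1
      rw [h3, ← Nat.add_assoc]
      exact hWov _
    · have hc2 : t % L + 1 = L := by omega
      have h3 : (t+1) % L = 0 := by rw [h1, hc2, Nat.mod_self]
      have h4 : i + t % L + 1 = j := by omega
      show (W (i + (t+1) % L)).take (m-1) = (W (i + t % L)).drop 1
      rw [h3, Nat.add_zero, hWij, ← h4]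
      exact hWov _
  have hene : ∀ t, e t ≠ [] := by
    intro t h
    have h2 := (heP t).2.1
    rw [h] at h2
    simp at h2
    omega
  -- counting
  set cnt : List (Letter k) → ℕ := fun v => ((Finset.range L).filter (fun t => e t = v)).card
    with hcntdef
  set q : List (Letter k) → ℝ := fun v => (cnt v : ℝ) / (L : ℝ) with hqdef
  have hLne : (L:ℝ) ≠ 0 := Nat.cast_ne_zero.mpr (by omega)
  have hcnt_zero : ∀ v, ¬(Reduced v ∧ v.length = m) → cnt v = 0 := by
    intro v hv
    simp only [hcntdef]
    rw [Finset.card_eq_zero, Finset.filter_eq_empty_iff]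
    intro t _ h
    exact hv (h ▸ ⟨(heP t).1, (heP t).2.1⟩)
  have hcnt_sum : ∑ v ∈ WordsM k m, cnt v = L := by
    simp only [hcntdef, Finset.card_filter]
    rw [Finset.sum_comm]
    have hinner : ∀ t ∈ Finset.range L,
        (∑ v ∈ WordsM k m, if e t = v then (1:ℕ) else 0) = 1 := by
      intro t _
      have h1 : ∀ v, (if e t = v then (1:ℕ) else 0) = (if v = e t then 1 else 0) := by
        intro v
        by_cases h : e t = v
        · rw [if_pos h, if_pos h.symm]
        · rw [if_neg h, if_neg (Ne.symm h)]
      rw [Finset.sum_congr rfl (fun v _ => h1 v), Finset.sum_ite_eq',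
        if_pos (mem_WordsM.mpr ⟨(heP t).1, (heP t).2.1⟩)]
    rw [Finset.sum_congr rfl hinner, Finset.sum_const, Finset.card_range, smul_eq_mul, mul_one]
  have inner_out : ∀ u, u.length = m - 1 → ∀ t : ℕ,
      (∑ x ∈ Finset.univ.filter (fun x : Letter k => Reduced (u ++ [x])),
        (if e t = u ++ [x] then (1:ℕ) else 0)) = if (e t).take (m-1) = u then 1 else 0 := by
    intro u hu t
    by_cases h : (e t).take (m-1) = u
    · have hlen : (e t).length = m := (heP t).2.1
      have hdrop : ((e t).drop (m-1)).length = 1 := by rw [List.length_drop, hlen]; omega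
      obtain ⟨x₀, hx₀⟩ := List.length_eq_one_iff.mp hdrop
      have hsplit : e t = u ++ [x₀] := by
        conv_lhs => rw [← List.take_append_drop (m-1) (e t)]
        rw [h, hx₀]
      rw [if_pos h]
      have hiff : ∀ x : Letter k, (e t = u ++ [x]) ↔ (x = x₀) := by
        intro x
        rw [hsplit]
        constructor
        · intro hh
          have := List.append_cancel_left hh
          simp at this
          exact this.symm
        · rintro rfl; rfl
      have h2 : ∀ x : Letter k, (if e t = u ++ [x] then (1:ℕ) else 0) =
          (if x = x₀ then 1 else 0) := by
        intro x
        by_cases hx : x = x₀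
        · rw [if_pos ((hiff x).mpr hx), if_pos hx]
        · rw [if_neg (fun hh => hx ((hiff x).mp hh)), if_neg hx]
      rw [Finset.sum_congr rfl (fun x _ => h2 x), Finset.sum_ite_eq',
        if_pos (Finset.mem_filter.mpr ⟨Finset.mem_univ _, hsplit ▸ (heP t).1⟩)]
    · rw [if_neg h]
      apply Finset.sum_eq_zero
      intro x _
      rw [if_neg]
      intro hh
      exact h (hh ▸ List.take_left' hu)
  have inner_in : ∀ u, u.length = m - 1 → ∀ t : ℕ,
      (∑ x ∈ Finset.univ.filter (fun x : Letter k => Reduced (x :: u)),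
        (if e t = x :: u then (1:ℕ) else 0)) = if (e t).drop 1 = u then 1 else 0 := by
    intro u hu t
    by_cases h : (e t).drop 1 = u
    · have hsplit : e t = (e t).head (hene t) :: u := by
        rw [← h, List.drop_one]
        exact (List.cons_head_tail (hene t)).symm
      rw [if_pos h]
      have hiff : ∀ x : Letter k, (e t = x :: u) ↔ (x = (e t).head (hene t)) := by
        intro x
        constructor
        · intro hh
          rw [hsplit] at hh
          exact (List.cons.injEq _ _ _ _ ▸ hh).1.symm
        · rintro rfl; exact hsplit
      have h2 : ∀ x : Letter k, (if e t = x :: u then (1:ℕ) else 0) =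
          (if x = (e t).head (hene t) then 1 else 0) := by
        intro x
        by_cases hx : x = (e t).head (hene t)
        · rw [if_pos ((hiff x).mpr hx), if_pos hx]
        · rw [if_neg (fun hh => hx ((hiff x).mp hh)), if_neg hx]
      rw [Finset.sum_congr rfl (fun x _ => h2 x), Finset.sum_ite_eq',
        if_pos (Finset.mem_filter.mpr ⟨Finset.mem_univ _, hsplit ▸ (heP t).1⟩)]
    · rw [if_neg h]
      apply Finset.sum_eq_zero
      intro x _
      rw [if_neg]
      intro hh
      apply h
      rw [hh, List.drop_one]
      rfl
  have hcount_out : ∀ u, u.length = m-1 →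
      (∑ x ∈ Finset.univ.filter (fun x : Letter k => Reduced (u ++ [x])), cnt (u ++ [x]))
      = ((Finset.range L).filter (fun t => (e t).take (m-1) = u)).card := by
    intro u hu
    rw [Finset.card_filter]
    simp only [hcntdef, Finset.card_filter]
    rw [Finset.sum_comm]
    exact Finset.sum_congr rfl fun t _ => inner_out u hu t
  have hcount_in : ∀ u, u.length = m-1 →
      (∑ x ∈ Finset.univ.filter (fun x : Letter k => Reduced (x :: u)), cnt (x :: u))
      = ((Finset.range L).filter (fun t => (e t).drop 1 = u)).card := by
    intro u hu
    rw [Finset.card_filter]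
    simp only [hcntdef, Finset.card_filter]
    rw [Finset.sum_comm]
    exact Finset.sum_congr rfl fun t _ => inner_in u hu t
  have key1 : ∀ a, a < L → ((a+1) % L + (L-1)) % L = a := by
    intro a ha
    rw [Nat.mod_add_mod]
    have h2 : a + 1 + (L-1) = a + L := by omega
    rw [h2, Nat.add_mod_right, Nat.mod_eq_of_lt ha]
  have key2 : ∀ a, a < L → ((a+(L-1)) % L + 1) % L = a := by
    intro a ha
    rw [Nat.mod_add_mod]
    have h2 : a + (L-1) + 1 = a + L := by omega
    rw [h2, Nat.add_mod_right, Nat.mod_eq_of_lt ha]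
  have hshift : ∀ u : List (Letter k),
      ((Finset.range L).filter (fun t => (e t).drop 1 = u)).card
      = ((Finset.range L).filter (fun t => (e t).take (m-1) = u)).card := by
    intro u
    have hpred : ∀ t, ((e t).drop 1 = u) ↔ ((e ((t+1) % L)).take (m-1) = u) := by
      intro t
      rw [hemod (t+1), heov t]
    rw [Finset.filter_congr (fun t _ => hpred t)]
    apply Finset.card_bij' (i := fun t _ => (t+1) % L) (j := fun t _ => (t + (L-1)) % L)
    · intro a ha
      rw [Finset.mem_filter] at ha ⊢
      exact ⟨Finset.mem_range.mpr (Nat.mod_lt _ hL), ha.2⟩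
    · intro b hb
      rw [Finset.mem_filter] at hb ⊢
      have hbL : b < L := Finset.mem_range.mp hb.1
      refine ⟨Finset.mem_range.mpr (Nat.mod_lt _ hL), ?_⟩
      rw [key2 b hbL]
      exact hb.2
    · intro a ha
      rw [Finset.mem_filter] at ha
      exact key1 a (Finset.mem_range.mp ha.1)
    · intro b hb
      rw [Finset.mem_filter] at hb
      exact key2 b (Finset.mem_range.mp hb.1)
  have hcnt_cons : ∀ u : List (Letter k), u.length = m-1 →
      (∑ x ∈ Finset.univ.filter (fun x : Letter k => Reduced (u ++ [x])), cnt (u ++ [x]))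
      = (∑ x ∈ Finset.univ.filter (fun x : Letter k => Reduced (x :: u)), cnt (x :: u)) := by
    intro u hu
    rw [hcount_out u hu, hcount_in u hu, hshift u]
  have hqQ : q ∈ Qset k m := by
    refine ⟨?_, ?_, ?_, ?_⟩
    · intro v hv
      simp only [hqdef, hcnt_zero v hv, Nat.cast_zero, zero_div]
    · intro v
      simp only [hqdef]
      positivity
    · simp only [hqdef]
      rw [← Finset.sum_div, ← Nat.cast_sum, hcnt_sum, div_self hLne]
    · intro u hur hul
      simp only [hqdef]
      rw [← Finset.sum_div, ← Finset.sum_div, ← Nat.cast_sum, ← Nat.cast_sum, hcnt_cons u hul]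
  -- minimum
  have himg_ne : ((Finset.range L).image (fun t => p (e t))).Nonempty :=
    Finset.Nonempty.image ⟨0, Finset.mem_range.mpr hL⟩ _
  set M := ((Finset.range L).image (fun t => p (e t))).min' himg_ne with hMdef
  have hMpos : 0 < M := by
    obtain ⟨t, ht, hte⟩ := Finset.mem_image.mp (Finset.min'_mem _ himg_ne)
    rw [hMdef, ← hte]
    exact (heP t).2.2
  have hMle : ∀ v, cnt v ≠ 0 → M ≤ p v := by
    intro v hv
    have hne : ((Finset.range L).filter (fun t => e t = v)).Nonempty := by
      rw [← Finset.card_pos]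
      exact Nat.pos_of_ne_zero hv
    obtain ⟨t, ht⟩ := hne
    rw [Finset.mem_filter] at ht
    rw [← ht.2, hMdef]
    exact Finset.min'_le _ _ (Finset.mem_image.mpr ⟨t, ht.1, rfl⟩)
  set ε : ℝ := min M (1/2) with hεdef
  have hε0 : 0 < ε := lt_min hMpos (by norm_num)
  have hε1 : ε < 1 := lt_of_le_of_lt (min_le_right _ _) (by norm_num)
  have h1ε : (0:ℝ) < 1 - ε := by linarith
  have hq1 : ∀ v, q v ≤ 1 := by
    intro v
    simp only [hqdef]
    rw [div_le_one (by positivity)]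
    have h2 : cnt v ≤ L := by
      have h3 := Finset.card_filter_le (Finset.range L) (fun t => e t = v)
      simp only [Finset.card_range] at h3
      exact h3
    exact_mod_cast h2
  have hkey : ∀ v, ε * q v ≤ p v := by
    intro v
    by_cases h : cnt v = 0
    · simp only [hqdef, h, Nat.cast_zero, zero_div, mul_zero]
      exact hnn v
    · calc ε * q v ≤ ε * 1 := by
            apply mul_le_mul_of_nonneg_left (hq1 v) (le_of_lt hε0)
        _ = ε := mul_one ε
        _ ≤ M := min_le_left _ _
        _ ≤ p v := hMle v h
  set r : List (Letter k) → ℝ := fun v => (p v - ε * q v) / (1 - ε) with hrdef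
  have hrQ : r ∈ Qset k m := by
    refine ⟨?_, ?_, ?_, ?_⟩
    · intro v hv
      simp only [hrdef, hqdef, hz v hv, hcnt_zero v hv, Nat.cast_zero, zero_div, mul_zero,
        sub_zero]
    · intro v
      apply div_nonneg _ (le_of_lt h1ε)
      linarith [hkey v]
    · simp only [hrdef]
      rw [← Finset.sum_div, Finset.sum_sub_distrib, ← Finset.mul_sum, hsum, hqQ.2.2.1, mul_one,
        div_self (ne_of_gt h1ε)]
    · intro u hur hul
      simp only [hrdef]
      rw [← Finset.sum_div, ← Finset.sum_div, Finset.sum_sub_distrib, Finset.sum_sub_distrib,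
        ← Finset.mul_sum, ← Finset.mul_sum, hcons u hur hul, hqQ.2.2.2 u hur hul]
  have hseg : p ∈ openSegment ℝ r q := by
    refine ⟨1 - ε, ε, h1ε, hε0, by ring, ?_⟩
    funext v
    simp only [Pi.add_apply, Pi.smul_apply, smul_eq_mul, hrdef]
    rw [mul_div_cancel₀ _ (ne_of_gt h1ε)]
    ring
  have hqp : q = p := hext hqQ hrQ (by rw [openSegment_symm]; exact hseg)
  have hpv : ∀ v, p v = (cnt v : ℝ) / L := by
    intro v
    rw [← hqp]
  have hsupp : ∀ v, 0 < p v → ∃ t, t < L ∧ e t = v := by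
    intro v hv
    rw [hpv v] at hv
    have hne : cnt v ≠ 0 := by
      intro h
      rw [h] at hv
      simp at hv
    have hne2 : ((Finset.range L).filter (fun t => e t = v)).Nonempty := by
      rw [← Finset.card_pos]
      exact Nat.pos_of_ne_zero hne
    obtain ⟨t, ht⟩ := hne2
    rw [Finset.mem_filter, Finset.mem_range] at ht
    exact ⟨t, ht.1, ht.2⟩
  -- connectivity
  have hadj : ∀ t, eadj k m p ((e t).take (m-1)) ((e (t+1)).take (m-1)) :=
    fun t => ⟨e t, (heP t).1, (heP t).2.1, (heP t).2.2, Or.inl ⟨rfl, (heov t).symm⟩⟩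
  have hchain : ∀ t, Relation.ReflTransGen (eadj k m p) ((e 0).take (m-1)) ((e t).take (m-1)) := by
    intro t
    induction t with
    | zero => exact Relation.ReflTransGen.refl
    | succ n ih => exact ih.tail (hadj n)
  have hsymm : Symmetric (eadj k m p) := by
    rintro a b ⟨v, h1, h2, h3, h4⟩
    exact ⟨v, h1, h2, h3, h4.symm⟩
  have hvert : ∀ u, isVert k m p u → ∃ t, (e t).take (m-1) = u := by
    rintro u ⟨v, h1, h2, h3, h4⟩
    obtain ⟨t, htL, rfl⟩ := hsupp v h3
    rcases h4 with h | h
    · exact ⟨t, h⟩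
    · exact ⟨t+1, (heov t).trans h⟩
  have hconn : GraphConn k m p := by
    intro u u' hu hu'
    obtain ⟨a, ha⟩ := hvert u hu
    obtain ⟨b, hb⟩ := hvert u' hu'
    rw [← ha, ← hb]
    exact (@Std.Symm.symm _ _ (@Relation.ReflTransGen.stdSymm _ _ ⟨fun _ _ h => hsymm h⟩) _ _ (hchain a)).trans (hchain b)
  -- the cyclic word
  set ℓ : ℕ → Letter k := fun t => (e t).head (hene t) with hldef
  have hlper : ∀ t, ℓ (t % L) = ℓ t := fun t => heads_eq (hemod t) _ _
  set w : List (Letter k) := List.ofFn (fun t : Fin L => ℓ (t : ℕ)) with hwdef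
  have hwlen : w.length = L := List.length_ofFn
  have hwget : ∀ t, t < L → w[t]? = some (ℓ t) := by
    intro t ht
    rw [hwdef, List.getElem?_ofFn]
    simp [List.ofFnNthVal, ht]
  have hhead : ∀ t, (e t)[0]? = some (ℓ t) := by
    intro t
    simp only [hldef]
    rw [← List.head?_eq_head (hene t)]
    cases h : e t with
    | nil => exact absurd h (hene t)
    | cons a l => simp
  have hletter : ∀ s, s < m → ∀ t, (e t)[s]? = some (ℓ (t + s)) := by
    intro s
    induction s with
    | zero => intro _ t; simpa using hhead t
    | succ s ih =>
      intro hs t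
      have h1 : (e (t+1))[s]? = (e t)[s + 1]? := overlap_letters (heov t) (by omega)
      have h2 : t + 1 + s = t + (s + 1) := by omega
      rw [← h1, ih (by omega) (t+1), h2]
  have hww : ∀ b, b < 2*L → (w ++ w)[b]? = some (ℓ (b % L)) := by
    intro b hb
    rw [List.getElem?_append]
    by_cases h : b < L
    · rw [if_pos (by rw [hwlen]; exact h), hwget b h, Nat.mod_eq_of_lt h]
    · have hLb : L ≤ b := by omega
      have hbL : b - L < L := by omega
      rw [if_neg (by rw [hwlen]; omega), hwlen, hwget _ hbL,
        Nat.mod_eq_sub_mod hLb, Nat.mod_eq_of_lt hbL]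
  have hwne : w ≠ [] := by
    intro h
    rw [h] at hwlen
    simp at hwlen
    omega
  have hcyc : CyclRed w := by
    intro a ha
    have hlen2 : (w ++ w).length = 2*L := by rw [List.length_append, hwlen]; ring
    rw [hlen2] at ha
    by_cases hb : a + 1 < 2*L
    · rw [hww a ha, hww (a+1) hb]
      simp only [Option.map_some]
      intro hcontra
      have hc1 : ℓ ((a+1) % L) = linv (ℓ (a % L)) := by
        injection hcontra
      have hmodeq : (a+1) % L = (a % L + 1) % L := mod_succ_mod a L
      have hl1 : (e (a % L))[1]? = some (ℓ (a % L + 1)) := hletter 1 (by omega) (a % L)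
      have hper : ℓ (a % L + 1) = ℓ ((a+1) % L) := by
        rw [hmodeq, hlper]
      rw [hper, hc1] at hl1
      have hred := (heP (a % L)).1 0 (by rw [(heP (a % L)).2.1]; omega)
      apply hred
      rw [hhead (a % L)]
      rw [show (0+1) = 1 from rfl, hl1]
      rfl
    · have hb2 : a + 1 = 2*L := by omega
      rw [List.getElem?_eq_none (by rw [hlen2]; omega), hww a ha]
      simp
  have hocc : ∀ v, Reduced v → v.length = m → ∀ t, (occursAt w v t ↔ e t = v) := by
    intro v hvr hvl t
    constructor
    · intro h
      apply List.ext_getElem?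
      intro n
      by_cases hn : n < m
      · have h1 := h n (by omega)
        rw [hwlen] at h1
        have h2 : w[(t+n) % L]? = some (ℓ ((t+n) % L)) := hwget _ (Nat.mod_lt _ hL)
        have h3 : (e t)[n]? = some (ℓ (t+n)) := hletter n hn t
        rw [h3, ← h1, h2, hlper]
      · rw [List.getElem?_eq_none (by rw [(heP t).2.1]; omega),
          List.getElem?_eq_none (by rw [hvl]; omega)]
    · rintro rfl
      intro n hn
      rw [(heP t).2.1] at hn
      rw [hwlen, hwget _ (Nat.mod_lt _ hL), hletter n hn t, hlper]
  have hcc : ∀ v, Reduced v → v.length = m → cyclCount w v = cnt v := by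
    intro v hvr hvl
    unfold cyclCount
    rw [hwlen]
    congr 1
    apply Finset.filter_congr
    intro t _
    exact hocc v hvr hvl t
  refine ⟨hconn, w, hcyc, hwne, ?_⟩
  intro v hvr hvl
  rw [hpv v]
  unfold freq
  rw [hcc v hvr hvl, hwlen]
  push_cast
  ring

end
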